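/- Let A ∈ C^{[m,n]} with n ≥ 2 and S a nonempty proper subset of N. Every eigenvalue λ of A lies in Ω^S(A) = (⋃_{i∈S, j∈S̄} Ω^S_{i,j}(A)) ∪ (⋃_{i∈S̄, j∈S} Ω^{S̄}_{i,j}(A)), where Ω^S_{i,j}(A) = {z ∈ ℂ : |z - a_{i…i}| (|z - a_{j…j}| - r_j^{Δ^S̄-part}(A)) ≤ r_i(A) r_j^{Δ^S}(A)}, with r_j^{Δ^S}(A) = Σ_{(i₂,…,i_m)∈Δ^S, not all equal to j} |a_{j i₂…i_m}| and r_j^{Δ^S-complement}(A) = Σ_{(i₂,…,i_m)∉Δ^S} |a_{j i₂…i_m}|. -/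

import Mathlib

open Finset

/-- off-diagonal row sum r_i(A) for a complex tensor of order k+1, dimension n -/
noncomputable def rT {n k : ℕ} (A : (Fin (k+1) → Fin n) → ℂ) (i : Fin n) : ℝ :=
  ∑ α ∈ Finset.univ.filter (fun α : Fin k → Fin n => α ≠ fun _ => i),
    ‖A (Fin.cons i α)‖

/-- r_i^j(A) = r_i(A) - |a_{ij...j}| -/
noncomputable def rTj {n k : ℕ} (A : (Fin (k+1) → Fin n) → ℂ) (i j : Fin n) : ℝ :=
  rT A i - ‖A (Fin.cons i fun _ => j)‖

/-- r_j^{Δ^S}(A): sum over index tuples all lying in S, excluding the diagonal tuple -/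
noncomputable def rDelta {n k : ℕ} (A : (Fin (k+1) → Fin n) → ℂ) (S : Finset (Fin n))
    (j : Fin n) : ℝ :=
  ∑ α ∈ Finset.univ.filter (fun α : Fin k → Fin n => (∀ l, α l ∈ S) ∧ α ≠ fun _ => j),
    ‖A (Fin.cons j α)‖

/-- r_j^{Δ^S-complement}(A): sum over index tuples not all lying in S -/
noncomputable def rDeltaC {n k : ℕ} (A : (Fin (k+1) → Fin n) → ℂ) (S : Finset (Fin n))
    (j : Fin n) : ℝ :=
  ∑ α ∈ Finset.univ.filter (fun α : Fin k → Fin n => ¬ (∀ l, α l ∈ S)),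
    ‖A (Fin.cons j α)‖

/-- λ is an eigenvalue of the tensor A: A x^{m-1} = λ x^{[m-1]} for some nonzero x -/
def IsEig {n k : ℕ} (A : (Fin (k+1) → Fin n) → ℂ) (lam : ℂ) : Prop :=
  ∃ x : Fin n → ℂ, x ≠ 0 ∧ ∀ i,
    (∑ α : Fin k → Fin n, A (Fin.cons i α) * ∏ l, x (α l)) = lam * (x i) ^ k

lemma cons_const' {n k : ℕ} (i : Fin n) :
    (Fin.cons i (fun _ => i) : Fin (k+1) → Fin n) = fun _ => i := by
  funext l
  refine Fin.cases ?_ ?_ l <;> simp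

lemma extract' {n k : ℕ} (A : (Fin (k+1) → Fin n) → ℂ) (lam : ℂ) (x : Fin n → ℂ)
    (heig : ∀ i, (∑ α : Fin k → Fin n, A (Fin.cons i α) * ∏ l, x (α l)) = lam * (x i) ^ k)
    (i : Fin n) :
    ∑ α ∈ Finset.univ.filter (fun α : Fin k → Fin n => α ≠ fun _ => i),
      A (Fin.cons i α) * ∏ l, x (α l)
      = (lam - A (fun _ => i)) * x i ^ k := by
  have h := heig i
  rw [← Finset.sum_filter_add_sum_filter_not Finset.univ
      (fun α : Fin k → Fin n => α = fun _ => i)] at h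
  rw [Finset.filter_eq' Finset.univ (fun _ => i : Fin k → Fin n)] at h
  simp only [Finset.mem_univ, if_true, Finset.sum_singleton, cons_const'] at h
  have hprod : (∏ l : Fin k, x ((fun _ => i : Fin k → Fin n) l)) = x i ^ k := by
    simp [Finset.prod_const]
  rw [hprod] at h
  have : ∑ α ∈ Finset.univ.filter (fun α : Fin k → Fin n => ¬ α = fun _ => i),
      A (Fin.cons i α) * ∏ l, x (α l) = (lam - A (fun _ => i)) * x i ^ k := by
    linear_combination h
  simpa using this

lemma prod_abs_le {n k : ℕ} (x : Fin n → ℂ) (α : Fin k → Fin n) (M : ℝ)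
    (hM : ∀ l, ‖x (α l)‖ ≤ M) :
    ‖∏ l, x (α l)‖ ≤ M ^ k := by
  rw [norm_prod]
  calc (∏ l, ‖x (α l)‖) ≤ ∏ _l : Fin k, M :=
        Finset.prod_le_prod (fun l _ => norm_nonneg _) (fun l _ => hM l)
    _ = M ^ k := by simp [Finset.prod_const]

lemma key' {n k : ℕ} (A : (Fin (k+1) → Fin n) → ℂ) (T : Finset (Fin n)) (lam : ℂ)
    (x : Fin n → ℂ) (hx0 : x ≠ 0)
    (heig : ∀ i, (∑ α : Fin k → Fin n, A (Fin.cons i α) * ∏ l, x (α l)) = lam * (x i) ^ k)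
    (p q : Fin n)
    (hp : ∀ i ∈ T, ‖x i‖ ≤ ‖x p‖)
    (hq : ∀ i, ‖x i‖ ≤ ‖x q‖) :
    ‖lam - A (fun _ => p)‖ *
        (‖lam - A (fun _ => q)‖ - rDeltaC A T q) ≤
      rT A p * rDelta A T q := by
  set M := ‖x q‖ with hMdef
  set m := ‖x p‖ with hmdef
  have hM0 : 0 < M := by
    obtain ⟨i, hi⟩ := Function.ne_iff.mp hx0
    have : 0 < ‖x i‖ := by
      simpa [norm_pos_iff] using hi
    exact lt_of_lt_of_le this (hq i)
  have hMk : 0 < M ^ k := pow_pos hM0 k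
  have hm0 : 0 ≤ m := norm_nonneg _
  have hmk : 0 ≤ m ^ k := pow_nonneg hm0 k
  have habs_nonneg : ∀ (s : Finset (Fin k → Fin n)) (j : Fin n),
      0 ≤ ∑ α ∈ s, ‖A (Fin.cons j α)‖ :=
    fun s j => Finset.sum_nonneg fun α _ => norm_nonneg _
  have hrT : 0 ≤ rT A p := habs_nonneg _ _
  have hrD : 0 ≤ rDelta A T q := habs_nonneg _ _
  -- claim 2: |lam - a_p| * m^k ≤ rT p * M^k
  have claim2 : ‖lam - A (fun _ => p)‖ * m ^ k ≤ rT A p * M ^ k := by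
    have h := extract' A lam x heig p
    have h2 : ‖(lam - A (fun _ => p)) * x p ^ k‖ ≤ rT A p * M ^ k := by
      rw [← h]
      refine le_trans (norm_sum_le _ _) ?_
      rw [rT, Finset.sum_mul]
      refine Finset.sum_le_sum fun α _ => ?_
      rw [norm_mul]
      exact mul_le_mul_of_nonneg_left (prod_abs_le x α M fun l => hq _)
        (norm_nonneg _)
    simpa [map_mul, map_pow] using h2
  -- claim 1
  have claim1 : ‖lam - A (fun _ => q)‖ * M ^ k ≤
      rDelta A T q * m ^ k + rDeltaC A T q * M ^ k := by
    have h := extract' A lam x heig q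
    have h1 : ‖(lam - A (fun _ => q)) * x q ^ k‖ ≤
        rDelta A T q * m ^ k + rDeltaC A T q * M ^ k := by
      rw [← h]
      refine le_trans (norm_sum_le _ _) ?_
      rw [← Finset.sum_filter_add_sum_filter_not
        (Finset.univ.filter (fun α : Fin k → Fin n => α ≠ fun _ => q))
        (fun α : Fin k → Fin n => ∀ l, α l ∈ T)]
      refine add_le_add ?_ ?_
      · rw [rDelta, Finset.sum_mul]
        rw [Finset.filter_filter]
        refine le_trans (Finset.sum_le_sum ?_) (Finset.sum_le_sum_of_subset_of_nonneg
          ?_ ?_)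
        · intro α hα
          simp only [Finset.mem_filter, Finset.mem_univ, true_and] at hα
          rw [norm_mul]
          exact (mul_le_mul_of_nonneg_left (prod_abs_le x α m fun l => hp _ (hα.2 l))
            (norm_nonneg _) :
            ‖A (Fin.cons q α)‖ * ‖∏ l, x (α l)‖ ≤
            ‖A (Fin.cons q α)‖ * m ^ k)
        · intro α hα
          simp only [Finset.mem_filter, Finset.mem_univ, true_and] at hα ⊢
          exact ⟨hα.2, hα.1⟩
        · intro α _ _
          exact mul_nonneg (norm_nonneg _) hmk
      · rw [rDeltaC, Finset.sum_mul]
        rw [Finset.filter_filter]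
        refine le_trans (Finset.sum_le_sum ?_) (Finset.sum_le_sum_of_subset_of_nonneg
          ?_ ?_)
        · intro α hα
          rw [norm_mul]
          exact (mul_le_mul_of_nonneg_left (prod_abs_le x α M fun l => hq _)
            (norm_nonneg _) :
            ‖A (Fin.cons q α)‖ * ‖∏ l, x (α l)‖ ≤
            ‖A (Fin.cons q α)‖ * M ^ k)
        · intro α hα
          simp only [Finset.mem_filter, Finset.mem_univ, true_and] at hα ⊢
          exact hα.2
        · intro α _ _
          exact mul_nonneg (norm_nonneg _) (le_of_lt hMk)
    simpa [map_mul, map_pow] using h1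
  -- final algebra
  by_cases he : ‖lam - A (fun _ => q)‖ - rDeltaC A T q ≤ 0
  · exact le_trans (mul_nonpos_of_nonneg_of_nonpos (norm_nonneg _) he)
      (mul_nonneg hrT hrD)
  · push_neg at he
    set e := ‖lam - A (fun _ => q)‖ - rDeltaC A T q with hedef
    have h1' : e * M ^ k ≤ rDelta A T q * m ^ k := by
      rw [hedef, sub_mul]
      linarith [claim1]
    have hmkpos : 0 < m ^ k := by
      by_contra hc
      push_neg at hc
      have : rDelta A T q * m ^ k ≤ 0 := mul_nonpos_of_nonneg_of_nonpos hrD hc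
      nlinarith [mul_pos he hMk]
    have hmul := mul_le_mul claim2 h1' (le_of_lt (mul_pos he hMk))
      (mul_nonneg hrT (le_of_lt hMk))
    have hfin : (‖lam - A (fun _ => p)‖ * e) * (m ^ k * M ^ k) ≤
        (rT A p * rDelta A T q) * (m ^ k * M ^ k) := by nlinarith [hmul]
    exact le_of_mul_le_mul_right hfin (mul_pos hmkpos hMk)

theorem stmt6 {n k : ℕ} (hn : 2 ≤ n) (A : (Fin (k+1) → Fin n) → ℂ)
    (S : Finset (Fin n)) (hS : S.Nonempty) (hS' : S ≠ Finset.univ) (lam : ℂ)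
    (h : IsEig A lam) :
    (∃ i ∈ S, ∃ j ∈ Sᶜ,
      ‖lam - A (fun _ => i)‖ *
          (‖lam - A (fun _ => j)‖ - rDeltaC A S j) ≤
        rT A i * rDelta A S j) ∨
    (∃ i ∈ Sᶜ, ∃ j ∈ S,
      ‖lam - A (fun _ => i)‖ *
          (‖lam - A (fun _ => j)‖ - rDeltaC A Sᶜ j) ≤
        rT A i * rDelta A Sᶜ j) := by
  obtain ⟨x, hx0, heig⟩ := h
  have hSc : Sᶜ.Nonempty := by
    rw [Finset.nonempty_iff_ne_empty]
    simpa [Finset.compl_eq_empty_iff] using hS'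
  obtain ⟨p, hpS, hp⟩ := S.exists_max_image (fun i => ‖x i‖) hS
  obtain ⟨q, hqSc, hq⟩ := Sᶜ.exists_max_image (fun i => ‖x i‖) hSc
  rcases le_total (‖x p‖) (‖x q‖) with hle | hle
  · -- q is a global max
    have hglob : ∀ i, ‖x i‖ ≤ ‖x q‖ := by
      intro i
      by_cases hi : i ∈ S
      · exact le_trans (hp i hi) hle
      · exact hq i (Finset.mem_compl.mpr hi)
    exact Or.inl ⟨p, hpS, q, hqSc, key' A S lam x hx0 heig p q hp hglob⟩
  · -- p is a global max
    have hglob : ∀ i, ‖x i‖ ≤ ‖x p‖ := by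
      intro i
      by_cases hi : i ∈ S
      · exact hp i hi
      · exact le_trans (hq i (Finset.mem_compl.mpr hi)) hle
    exact Or.inr ⟨q, hqSc, p, hpS, key' A Sᶜ lam x hx0 heig q p hq hglob⟩
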